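/- Let E^1, E^0 be locally compact Hausdorff spaces, s : E^1 → E^0 a local homeomorphism, and C a C*-algebra. For ξ, η continuous compactly supported functions from E^1 to C, the function v ↦ Σ_{e ∈ s⁻¹(v)} ξ(e)* η(e) on E^0 is well-defined (the sum is finite for each v) and is a continuous compactly supported function from E^0 to C. -/

import Mathlib

open scoped BigOperators

open Set Function

/-- Fibers of a local homeomorphism intersected with a compact set are finite. -/
theorem fiber_inter_compact_finite {E1 E0 : Type*} [TopologicalSpace E1] [TopologicalSpace E0]
    [T2Space E1] [T1Space E0] {s : E1 → E0} (hs : IsLocalHomeomorph s) {K : Set E1} (hK : IsCompact K)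
    (hKc : IsClosed K) (v : E0) : (s ⁻¹' {v} ∩ K).Finite := by
  classical
  have hcont : Continuous s := hs.continuous
  set S : Set E1 := s ⁻¹' {v} ∩ K with hS
  have hScl : IsClosed S := (isClosed_singleton.preimage hcont).inter hKc
  have hScpt : IsCompact S := hK.of_isClosed_subset hScl inter_subset_right
  choose φ hφmem hφeq using hs
  obtain ⟨b, hbS, hbfin, hcover⟩ :=
    hScpt.elim_finite_subcover_image (fun x (_ : x ∈ S) => (φ x).open_source)
      (fun e he => mem_iUnion₂.2 ⟨e, he, hφmem e⟩)
  refine hbfin.subset fun y hy => ?_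
  obtain ⟨x, hxb, hyx⟩ := mem_iUnion₂.1 (hcover hy)
  have hxS : x ∈ S := hbS hxb
  have : y = x := by
    apply (φ x).injOn hyx (hφmem x)
    have h1 : s y = v := hy.1
    have h2 : s x = v := hxS.1
    rw [← hφeq x]; rw [h1, h2]
  rwa [this]

/-- For a local homeomorphism `s : E¹ → E⁰` between locally compact Hausdorff spaces, a
C*-algebra `C`, and continuous compactly supported `ξ, η : E¹ → C`, the fiberwise sum
`v ↦ Σ_{s e = v} (ξ e)* (η e)` has finitely many nonzero terms for each `v`, and defines
a continuous compactly supported function `E⁰ → C`. -/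
theorem fiber_sum_continuous_compactly_supported {E1 E0 C : Type*}
    [TopologicalSpace E1] [TopologicalSpace E0]
    [LocallyCompactSpace E1] [T2Space E1] [LocallyCompactSpace E0] [T2Space E0]
    [NormedRing C] [StarRing C] [CStarRing C] [CompleteSpace C]
    [NormedAlgebra ℂ C] [StarModule ℂ C]
    (s : E1 → E0) (hs : IsLocalHomeomorph s)
    (ξ η : E1 → C) (hξ : Continuous ξ) (hξc : HasCompactSupport ξ)
    (hη : Continuous η) (hηc : HasCompactSupport η) :
    (∀ v : E0, {e : E1 | s e = v ∧ star (ξ e) * η e ≠ 0}.Finite) ∧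
    Continuous (fun v : E0 => ∑ᶠ e ∈ s ⁻¹' {v}, star (ξ e) * η e) ∧
    HasCompactSupport (fun v : E0 => ∑ᶠ e ∈ s ⁻¹' {v}, star (ξ e) * η e) := by
  classical
  set g : E1 → C := fun e => star (ξ e) * η e with hgdef
  have hgc : Continuous g := (continuous_star.comp hξ).mul hη
  have hcont : Continuous s := hs.continuous
  have hsupp : support g ⊆ tsupport ξ := fun e he => by
    refine subset_closure ?_
    intro h0
    apply he
    simp only [hgdef, mem_setOf_eq, h0, star_zero, zero_mul]
  have hfin : ∀ v : E0, (s ⁻¹' {v} ∩ tsupport ξ).Finite := fun v =>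
    fiber_inter_compact_finite hs hξc (isClosed_tsupport ξ) v
  have hfin' : ∀ v : E0, {e : E1 | s e = v ∧ g e ≠ 0}.Finite := by
    intro v
    refine (hfin v).subset fun e he => ⟨he.1, hsupp he.2⟩
  refine ⟨hfin', ?_, ?_⟩
  · -- Continuity
    rw [continuous_iff_continuousAt]
    intro v₀
    set S₀ : Set E1 := s ⁻¹' {v₀} ∩ tsupport ξ with hS₀def
    have hS₀ : S₀.Finite := hfin v₀
    obtain ⟨U, hU, hUdisj⟩ := hS₀.t2_separation
    choose φ hφmem hφeq using hs
    set ψ : E1 → OpenPartialHomeomorph E1 E0 := fun x => (φ x).restrOpen (U x) (hU x).2 with hψdef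
    have hψeq : ∀ x, s = ⇑(ψ x) := fun x => hφeq x
    have hψsource : ∀ x, (ψ x).source = (φ x).source ∩ U x := fun x =>
      (φ x).restrOpen_source (U x) (hU x).2
    have hxmem : ∀ x, x ∈ (ψ x).source := fun x =>
      (hψsource x) ▸ ⟨hφmem x, (hU x).1⟩
    have hv₀mem : ∀ x ∈ S₀, v₀ ∈ (ψ x).target := by
      intro x hx
      have := (ψ x).map_source (hxmem x)
      rwa [← hψeq x, hx.1] at this
    -- the neighborhood W of v₀
    set A : Set E1 := tsupport ξ \ ⋃ x ∈ S₀, (ψ x).source with hAdef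
    have hAcpt : IsCompact A := hξc.diff (isOpen_biUnion fun x _ => (ψ x).open_source)
    have hv₀A : v₀ ∉ s '' A := by
      rintro ⟨a, ⟨haK, haU⟩, hav⟩
      exact haU (mem_iUnion₂.2 ⟨a, ⟨hav, haK⟩, hxmem a⟩)
    set W : Set E0 := (⋂ x ∈ S₀, (ψ x).target) ∩ (s '' A)ᶜ with hWdef
    have hWnhds : W ∈ nhds v₀ := by
      refine Filter.inter_mem ?_ ?_
      · refine (hS₀.isOpen_biInter fun x _ => (ψ x).open_target).mem_nhds ?_
        exact mem_iInter₂.2 hv₀mem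
      · exact (hAcpt.image hcont).isClosed.isOpen_compl.mem_nhds hv₀A
    -- the local formula
    have hkey : ∀ v ∈ W, (∑ᶠ e ∈ s ⁻¹' {v}, g e) =
        ∑ x ∈ hS₀.toFinset, g ((ψ x).symm v) := by
      intro v hv
      have hvT : ∀ x ∈ S₀, v ∈ (ψ x).target := fun x hx =>
        mem_iInter₂.1 hv.1 x hx
      set j : E1 → E1 := fun x => (ψ x).symm v with hjdef
      have hjfib : ∀ x ∈ S₀, s (j x) = v := by
        intro x hx
        rw [hψeq x]
        exact (ψ x).right_inv (hvT x hx)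
      have hinj : InjOn j S₀ := by
        intro x hx y hy hxy
        by_contra hne
        have h1 : j x ∈ U x := ((hψsource x) ▸ (ψ x).map_target (hvT x hx)).2
        have h2 : j y ∈ U y := ((hψsource y) ▸ (ψ y).map_target (hvT y hy)).2
        exact (hUdisj hx hy hne).le_bot ⟨h1, hxy ▸ h2⟩
      have hsets : s ⁻¹' {v} ∩ support g = (j '' S₀) ∩ support g := by
        ext e
        constructor
        · rintro ⟨hev, heg⟩
          refine ⟨?_, heg⟩
          have heK : e ∈ tsupport ξ := hsupp heg
          have heA : e ∉ A := by
            intro heA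
            exact hv.2 ⟨e, heA, hev⟩
          have : e ∈ ⋃ x ∈ S₀, (ψ x).source := by
            by_contra h
            exact heA ⟨heK, h⟩
          obtain ⟨x, hx, hex⟩ := mem_iUnion₂.1 this
          refine ⟨x, hx, ?_⟩
          have : (ψ x) e = v := by rw [← hψeq x]; exact hev
          rw [hjdef]
          simp only
          rw [← this, (ψ x).left_inv hex]
        · rintro ⟨⟨x, hx, rfl⟩, heg⟩
          exact ⟨hjfib x hx, heg⟩
      calc (∑ᶠ e ∈ s ⁻¹' {v}, g e) = ∑ᶠ e ∈ (s ⁻¹' {v}) ∩ support g, g e :=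
            (finsum_mem_inter_support g _).symm
        _ = ∑ᶠ e ∈ (j '' S₀) ∩ support g, g e := by rw [hsets]
        _ = ∑ᶠ e ∈ j '' S₀, g e := finsum_mem_inter_support g _
        _ = ∑ᶠ x ∈ S₀, g (j x) := finsum_mem_image hinj
        _ = ∑ x ∈ hS₀.toFinset, g (j x) := finsum_mem_eq_finite_toFinset_sum _ hS₀
    have hcongr : (fun v : E0 => ∑ᶠ e ∈ s ⁻¹' {v}, g e) =ᶠ[nhds v₀]
        (fun v => ∑ x ∈ hS₀.toFinset, g ((ψ x).symm v)) :=
      Filter.eventually_of_mem hWnhds hkey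
    refine ContinuousAt.congr ?_ hcongr.symm
    refine tendsto_finset_sum _ fun x hx => ?_
    have hxS₀ : x ∈ S₀ := hS₀.mem_toFinset.1 hx
    have hsymm : ContinuousAt (ψ x).symm v₀ :=
      (ψ x).symm.continuousAt (by rw [OpenPartialHomeomorph.symm_source]; exact hv₀mem x hxS₀)
    exact hgc.continuousAt.comp hsymm
  · -- Compact support
    apply HasCompactSupport.intro (hξc.image hcont)
    intro v hv
    apply finsum_mem_of_eqOn_zero
    intro e he
    by_contra h
    exact hv ⟨e, hsupp h, he⟩
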